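/- Let ι be a finite index type, r ≥ 0 a real number, b a real number, and C, Ĉ, x : ι → ℝ. Then the semi-infinite constraint "for every ξ : ι → ℝ with √(∑_i (ξ i)²) ≤ r, ∑_i (C i + Ĉ i * ξ i) * x i ≤ b" holds if and only if ∑_i C i * x i + r * √(∑_i (Ĉ i)² * (x i)²) ≤ b. -/

import Mathlib

theorem ellipsoid_robust_upper_quality
    {ι : Type*} [Fintype ι] (r b : ℝ) (hr : 0 ≤ r) (C Chat x : ι → ℝ) :
    (∀ ξ : ι → ℝ, Real.sqrt (∑ i, (ξ i) ^ 2) ≤ r →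
        ∑ i, (C i + Chat i * ξ i) * x i ≤ b) ↔
      ∑ i, C i * x i + r * Real.sqrt (∑ i, (Chat i) ^ 2 * (x i) ^ 2) ≤ b := by
  set a : ι → ℝ := fun i => Chat i * x i with ha
  have hsq : ∀ i, Chat i ^ 2 * x i ^ 2 = a i ^ 2 := fun i => (mul_pow _ _ _).symm
  have hsum : (∑ i, Chat i ^ 2 * x i ^ 2) = ∑ i, a i ^ 2 := by
    simp [hsq]
  have hS : 0 ≤ ∑ i, a i ^ 2 := Finset.sum_nonneg fun i _ => sq_nonneg _
  set S : ℝ := Real.sqrt (∑ i, a i ^ 2) with hSdef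
  have hS0 : 0 ≤ S := Real.sqrt_nonneg _
  have hexpand : ∀ ξ : ι → ℝ,
      (∑ i, (C i + Chat i * ξ i) * x i) = (∑ i, C i * x i) + ∑ i, a i * ξ i := by
    intro ξ
    rw [← Finset.sum_add_distrib]
    congr 1; ext i; ring
  rw [hsum]
  constructor
  · intro h
    rcases eq_or_lt_of_le hS0 with hS0' | hSpos
    · have h0 := h 0 (by simpa using hr)
      rw [hexpand] at h0
      rw [← hSdef, ← hS0', mul_zero, add_zero]
      simpa using h0
    · set ξ : ι → ℝ := fun i => r * a i / S with hξ
      have hS2 : S ^ 2 = ∑ i, a i ^ 2 := Real.sq_sqrt hS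
      have hsumpos : 0 < ∑ i, a i ^ 2 := hS2 ▸ pow_pos hSpos 2
      have hξnorm : Real.sqrt (∑ i, ξ i ^ 2) ≤ r := by
        have : (∑ i, ξ i ^ 2) = r ^ 2 := by
          have : (∑ i, ξ i ^ 2) = (r ^ 2 / S ^ 2) * ∑ i, a i ^ 2 := by
            rw [Finset.mul_sum]; congr 1; ext i
            rw [hξ]; field_simp
          rw [this, hS2, div_mul_cancel₀ _ hsumpos.ne']
        rw [this, Real.sqrt_sq hr]
      have h1 := h ξ hξnorm
      rw [hexpand] at h1
      have h2 : (∑ i, a i * ξ i) = r * S := by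
        have : (∑ i, a i * ξ i) = (r / S) * ∑ i, a i ^ 2 := by
          rw [Finset.mul_sum]; congr 1; ext i
          rw [hξ]; field_simp
        rw [this, ← hS2]
        field_simp
      rw [h2] at h1
      exact h1
  · intro h ξ hξ
    rw [hexpand]
    have hcs : (∑ i, a i * ξ i) ≤ S * Real.sqrt (∑ i, ξ i ^ 2) :=
      Real.sum_mul_le_sqrt_mul_sqrt _ _ _
    have : S * Real.sqrt (∑ i, ξ i ^ 2) ≤ S * r :=
      mul_le_mul_of_nonneg_left hξ hS0
    linarith [mul_comm S r ▸ this]
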